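/- Let G be the semidirect product Λ ⋊ ℤ/2 with Λ ≅ ℤⁿ and ℤ/2 acting by −id. There is exactly one nontrivial group homomorphism φ : G → ℚ/ℤ that vanishes on all elements of infinite order, namely the projection to ℤ/2 followed by the inclusion ℤ/2 ↪ ℚ/ℤ. -/

import Mathlib

open SemidirectProduct

/-- The negation automorphism of a commutative group (written multiplicatively). -/
def negAut (Λ : Type*) [CommGroup Λ] : MulAut Λ := MulEquiv.inv Λ

/-- The action of `ℤ/2` on a commutative group `Λ` in which the nontrivial element
acts by inversion (i.e. by `-id` in additive notation). -/
def negAct (Λ : Type*) [CommGroup Λ] : Multiplicative (ZMod 2) →* MulAut Λ where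
  toFun ε := if Multiplicative.toAdd ε = 0 then 1 else negAut Λ
  map_one' := by simp
  map_mul' a b := by
    have key : ∀ x : ZMod 2, x = 0 ∨ x = 1 := by decide
    have hsq : negAut Λ * negAut Λ = 1 := by
      ext x; simp [negAut]
    rcases key (Multiplicative.toAdd a) with h1 | h1 <;>
      rcases key (Multiplicative.toAdd b) with h2 | h2 <;>
        simp [toAdd_mul, h1, h2, hsq, show (1 : ZMod 2) + 1 = 0 by decide]

/-- `Λ ⋊ ℤ/2`, with `ℤ/2` acting by `-id`, for `Λ` free abelian of rank `n`. -/
abbrev SD (n : ℕ) :=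
  Multiplicative (Fin n → ℤ) ⋊[negAct (Multiplicative (Fin n → ℤ))] Multiplicative (ZMod 2)


/-- `ℚ/ℤ`. -/
abbrev QZ := AddCircle (1 : ℚ)

lemma half_add_half : ((2⁻¹ : ℚ) : QZ) + ((2⁻¹ : ℚ) : QZ) = 0 := by
  have h : (2⁻¹ : ℚ) + (2⁻¹ : ℚ) = 1 := by norm_num
  rw [← AddCircle.coe_add, h]
  exact AddCircle.coe_period (1 : ℚ)

/-- The projection `Λ ⋊ ℤ/2 → ℤ/2` followed by the inclusion `ℤ/2 ↪ ℚ/ℤ`, `1 ↦ 1/2`. -/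
def projQZ (n : ℕ) : SD n →* Multiplicative QZ where
  toFun g := Multiplicative.ofAdd
    (if Multiplicative.toAdd (SemidirectProduct.rightHom g) = 0 then 0 else ((1/2 : ℚ) : QZ))
  map_one' := by simp
  map_mul' a b := by
    have key : ∀ x : Multiplicative (ZMod 2), x = 1 ∨ x = Multiplicative.ofAdd 1 := by decide
    rcases key a.right with h1 | h1 <;> rcases key b.right with h2 | h2 <;>
      simp [h1, h2, half_add_half, ← ofAdd_add,
        show (Multiplicative.ofAdd (1 : ZMod 2)) ≠ 1 by decide,
        show Multiplicative.ofAdd (1 : ZMod 2) * Multiplicative.ofAdd (1 : ZMod 2) = 1 by decide]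


lemma qz_half_ne_zero : ((1/2 : ℚ) : QZ) ≠ 0 := by
  intro h
  rw [AddCircle.coe_eq_zero_iff] at h
  obtain ⟨k, hk⟩ := h
  have h2 : (2 * k : ℚ) = 1 := by
    have : (k : ℚ) = 1/2 := by simpa using hk
    rw [this]; norm_num
  have : (2 * k : ℤ) = 1 := by exact_mod_cast h2
  omega

lemma qz_two_torsion (c : QZ) (h : c + c = 0) : c = 0 ∨ c = ((1/2 : ℚ) : QZ) := by
  induction c using QuotientAddGroup.induction_on with
  | H q =>
    rw [show ((q : QZ) + q) = ((q + q : ℚ) : QZ) from rfl, AddCircle.coe_eq_zero_iff] at h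
    obtain ⟨k, hk⟩ := h
    simp only [zsmul_eq_mul, mul_one] at hk
    rcases Int.even_or_odd k with ⟨m, hm⟩ | ⟨m, hm⟩
    · left
      rw [AddCircle.coe_eq_zero_iff]
      refine ⟨m, ?_⟩
      simp only [zsmul_eq_mul, mul_one]
      have : (q + q : ℚ) = m + m := by rw [← hk, hm]; push_cast; ring
      linarith
    · right
      rw [← sub_eq_zero, ← AddCircle.coe_sub, AddCircle.coe_eq_zero_iff]
      refine ⟨m, ?_⟩
      simp only [zsmul_eq_mul, mul_one]
      have : (q + q : ℚ) = 2*m + 1 := by rw [← hk, hm]; push_cast; ring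
      linarith

lemma lat_torsion_free {n : ℕ} (a : Multiplicative (Fin n → ℤ)) (h : IsOfFinOrder a) :
    a = 1 := by
  obtain ⟨k, hk, hpow⟩ := isOfFinOrder_iff_pow_eq_one.mp h
  have : ∀ i, k • (Multiplicative.toAdd a) i = 0 := by
    intro i
    have := congrFun (congrArg Multiplicative.toAdd hpow) i
    simpa [toAdd_pow] using this
  have ha : Multiplicative.toAdd a = 0 := by
    funext i
    have := this i
    simp only [nsmul_eq_mul] at this
    exact by
      rcases mul_eq_zero.mp (by exact_mod_cast this) with h' | h'
      · omega
      · exact h'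
  have := congrArg Multiplicative.ofAdd ha
  simpa using this

lemma sq_one_of_right_ne_one {n : ℕ} (g : SD n) (h : g.right ≠ 1) : g * g = 1 := by
  have hr : Multiplicative.toAdd g.right = 1 := by
    have : ∀ x : Multiplicative (ZMod 2), x ≠ 1 → Multiplicative.toAdd x = 1 := by decide
    exact this _ h
  ext : 1
  · show g.left * (negAct _ g.right) g.left = 1
    simp [negAct, hr, negAut, h]
  · show g.right * g.right = 1
    have : ∀ x : Multiplicative (ZMod 2), Multiplicative.toAdd x = 1 → x * x = 1 := by decide
    exact this _ hr

lemma finOrder_of_right_ne_one {n : ℕ} (g : SD n) (h : g.right ≠ 1) : IsOfFinOrder g :=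
  isOfFinOrder_iff_pow_eq_one.mpr ⟨2, by norm_num, by rw [pow_two]; exact sq_one_of_right_ne_one g h⟩

/-- In `G = Λ ⋊ ℤ/2` with `Λ ≅ ℤⁿ` and `ℤ/2` acting by `-id`, there is exactly one
nontrivial homomorphism `G → ℚ/ℤ` vanishing on all elements of infinite order,
namely the projection to `ℤ/2` followed by the inclusion `ℤ/2 ↪ ℚ/ℤ`. -/
theorem unique_hom_vanishing_on_infinite_order (n : ℕ) (hn : 1 ≤ n) :
    (projQZ n ≠ 1 ∧ ∀ g : SD n, ¬ IsOfFinOrder g → projQZ n g = 1) ∧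
    ∀ φ : SD n →* Multiplicative QZ,
      φ ≠ 1 → (∀ g : SD n, ¬ IsOfFinOrder g → φ g = 1) → φ = projQZ n := by
  constructor
  · constructor
    · intro h
      have h1 : projQZ n (SemidirectProduct.inr (Multiplicative.ofAdd (1 : ZMod 2))) = 1 := by
        rw [h]; rfl
      simp only [projQZ, MonoidHom.coe_mk, OneHom.coe_mk, rightHom_inr] at h1
      rw [if_neg (by decide)] at h1
      exact qz_half_ne_zero (by simpa using h1)
    · intro g hg
      have hr : g.right = 1 := by
        by_contra h
        exact hg (finOrder_of_right_ne_one g h)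
      simp [projQZ, rightHom, hr]
  · intro φ hne hvan
    have hinl : ∀ l : Multiplicative (Fin n → ℤ), φ (SemidirectProduct.inl l) = 1 := by
      intro l
      by_cases hl : l = 1
      · simp [hl]
      · apply hvan
        intro hfin
        apply hl
        obtain ⟨k, hk, hpow⟩ := isOfFinOrder_iff_pow_eq_one.mp hfin
        have : SemidirectProduct.inl (l ^ k) = (1 : SD n) := by
          rw [map_pow, hpow]
        have hlk : l ^ k = 1 := SemidirectProduct.inl_injective (by simpa using this)
        exact lat_torsion_free l (isOfFinOrder_iff_pow_eq_one.mpr ⟨k, hk, hlk⟩)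
    set c := φ (SemidirectProduct.inr (Multiplicative.ofAdd (1 : ZMod 2))) with hc
    have hcc : c * c = 1 := by
      rw [hc, ← map_mul, ← map_mul]
      have : (Multiplicative.ofAdd (1 : ZMod 2)) * (Multiplicative.ofAdd (1 : ZMod 2)) = 1 := by
        decide
      rw [this, map_one, map_one]
    have hkey : ∀ x : Multiplicative (ZMod 2), x = 1 ∨ x = Multiplicative.ofAdd 1 := by decide
    have hct : Multiplicative.toAdd c + Multiplicative.toAdd c = 0 := by
      have := congrArg Multiplicative.toAdd hcc
      simpa using this
    rcases qz_two_torsion _ hct with h0 | hhalf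
    · exfalso
      apply hne
      ext g
      rw [← SemidirectProduct.inl_left_mul_inr_right g, map_mul, hinl, one_mul]
      rcases hkey g.right with h | h
      · rw [h, map_one]; simp
      · rw [h, ← hc]
        have hc1 : c = 1 := by
          have := congrArg Multiplicative.ofAdd h0
          simpa using this
        rw [hc1]; simp
    · ext g
      rw [← SemidirectProduct.inl_left_mul_inr_right g, map_mul, hinl, one_mul, map_mul]
      have hp : projQZ n (SemidirectProduct.inl g.left) = 1 := by
        simp [projQZ, rightHom]
      rw [hp, one_mul]
      rcases hkey g.right with h | h
      · rw [h]; simp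

      · rw [h, ← hc]
        have hcval : c = Multiplicative.ofAdd ((1/2 : ℚ) : QZ) := by
          have := congrArg Multiplicative.ofAdd hhalf
          simpa using this
        rw [hcval]
        simp only [projQZ, MonoidHom.coe_mk, OneHom.coe_mk, rightHom_inr]
        rw [if_neg (by decide)]
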